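/- Let T be a finite set with positive real weights w, let n ≤ |T|, let V be a list of i < n distinct elements of T, and let τ ∉ T be a new element with positive weight w_τ. Then the total probability mass transferred by the reservoir swap step equals the correct selection probability of the new element: Σ_{t̂ ∈ T \ V} ( P̂(t̂ | V; T, n) − P̂(t̂ | V; T ∪ {τ}, n) ) = P̂(τ | V; T ∪ {τ}, n). -/
import Mathlib


/-- Weighted elementary symmetric sum: `e_m(S; w) = Σ_{T̂ ⊆ S, |T̂| = m} ∏_{j ∈ T̂} w_j`. -/
noncomputable def esymm {ι : Type*} (S : Finset ι) (w : ι → ℝ) (m : ℕ) : ℝ :=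
  ∑ T ∈ S.powersetCard m, ∏ j ∈ T, w j

/-- The sequential selection probability
`P̂(t | V; T, n) = w_t · e_{n-i-1}(T \ (V ∪ {t}); w) / ((n - i) · e_{n-i}(T \ V; w))`
where `i` is the number of already-selected elements recorded in the list `V`. -/
noncomputable def Phat {ι : Type*} [DecidableEq ι] (T : Finset ι) (w : ι → ℝ) (n : ℕ)
    (V : List ι) (t : ι) : ℝ :=
  w t * esymm (T \ insert t V.toFinset) w (n - V.length - 1) /
    (((n - V.length : ℕ) : ℝ) * esymm (T \ V.toFinset) w (n - V.length))

lemma esymm_zero {ι : Type*} (S : Finset ι) (w : ι → ℝ) : esymm S w 0 = 1 := by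
  simp [esymm, Finset.powersetCard_zero]

lemma esymm_insert {ι : Type*} [DecidableEq ι] {S : Finset ι} {a : ι} (ha : a ∉ S)
    (w : ι → ℝ) (m : ℕ) :
    esymm (insert a S) w (m + 1) = esymm S w (m + 1) + w a * esymm S w m := by
  unfold esymm
  rw [Finset.powersetCard_succ_insert ha, Finset.sum_union, Finset.sum_image]
  · congr 1
    rw [Finset.mul_sum]
    refine Finset.sum_congr rfl fun A hA => ?_
    rw [Finset.prod_insert fun haA => ha ((Finset.mem_powersetCard.mp hA).1 haA)]
  · intro A hA B hB hAB
    have hA' : a ∉ A := fun h => ha ((Finset.mem_powersetCard.mp hA).1 h)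
    have hB' : a ∉ B := fun h => ha ((Finset.mem_powersetCard.mp hB).1 h)
    rw [← Finset.erase_insert hA', hAB, Finset.erase_insert hB']
  · rw [Finset.disjoint_right]
    intro A hA hA'
    obtain ⟨B, hB, rfl⟩ := Finset.mem_image.mp hA
    exact ha ((Finset.mem_powersetCard.mp hA').1 (Finset.mem_insert_self a B))

lemma sum_deriv {ι : Type*} [DecidableEq ι] (S : Finset ι) (w : ι → ℝ) (m : ℕ) :
    ∑ t ∈ S, w t * esymm (S.erase t) w m = (m + 1 : ℝ) * esymm S w (m + 1) := by
  induction S using Finset.induction_on generalizing m with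
  | empty =>
    simp [esymm, Finset.powersetCard_eq_empty.mpr (by simp : (∅ : Finset ι).card < m + 1)]
  | @insert a S ha IH =>
    rw [Finset.sum_insert ha, Finset.erase_insert ha]
    have herase : ∀ t ∈ S, (insert a S).erase t = insert a (S.erase t) := by
      intro t ht
      have : t ≠ a := fun h => ha (h ▸ ht)
      rw [Finset.erase_insert_of_ne this.symm]
    rw [Finset.sum_congr rfl fun t ht => by rw [herase t ht]]
    cases m with
    | zero =>
      have h0 : ∀ X : Finset ι, esymm X w 0 = 1 := fun X => esymm_zero X w
      simp only [h0, mul_one]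
      have := IH 0
      simp only [h0, mul_one] at this
      rw [esymm_insert ha w 0, h0]
      push_cast
      rw [this]
      ring
    | succ m' =>
      have hstep : ∀ t ∈ S, w t * esymm (insert a (S.erase t)) w (m' + 1)
          = w t * esymm (S.erase t) w (m' + 1) + w a * (w t * esymm (S.erase t) w m') := by
        intro t ht
        rw [esymm_insert (fun h => ha (Finset.mem_of_mem_erase h)) w m']
        ring
      rw [Finset.sum_congr rfl hstep, Finset.sum_add_distrib, ← Finset.mul_sum, IH, IH,
        esymm_insert ha w (m' + 1)]
      push_cast
      ring

lemma esymm_pos {ι : Type*} {S : Finset ι} {w : ι → ℝ} (hw : ∀ j ∈ S, 0 < w j)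
    {m : ℕ} (hm : m ≤ S.card) : 0 < esymm S w m := by
  refine Finset.sum_pos (fun A hA => Finset.prod_pos fun j hj =>
    hw j ((Finset.mem_powersetCard.mp hA).1 hj)) ?_
  exact Finset.powersetCard_nonempty.mpr hm

lemma sum_deriv_insert {ι : Type*} [DecidableEq ι] {S : Finset ι} {τ : ι} (hτ : τ ∉ S)
    (w : ι → ℝ) (m : ℕ) :
    ∑ t ∈ S, w t * esymm (insert τ (S.erase t)) w m
      = (m + 1 : ℝ) * esymm S w (m + 1) + w τ * ((m : ℝ) * esymm S w m) := by
  cases m with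
  | zero =>
    simp only [esymm_zero, mul_one, Nat.cast_zero, zero_mul, mul_zero, add_zero]
    have := sum_deriv S w 0
    simp only [esymm_zero, mul_one] at this
    rw [this]; norm_num
  | succ m' =>
    have hstep : ∀ t ∈ S, w t * esymm (insert τ (S.erase t)) w (m' + 1)
        = w t * esymm (S.erase t) w (m' + 1) + w τ * (w t * esymm (S.erase t) w m') := by
      intro t ht
      rw [esymm_insert (fun h => hτ (Finset.mem_of_mem_erase h)) w m']
      ring
    rw [Finset.sum_congr rfl hstep, Finset.sum_add_distrib, ← Finset.mul_sum,
      sum_deriv, sum_deriv]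
    push_cast
    ring

/-- The total probability mass transferred by the reservoir swap step equals the correct
selection probability of the new element `τ ∉ T`:
`Σ_{t̂ ∈ T \ V} (P̂(t̂ | V; T, n) − P̂(t̂ | V; T ∪ {τ}, n)) = P̂(τ | V; T ∪ {τ}, n)`. -/
theorem sum_swap_mass_eq {ι : Type*} [DecidableEq ι] (T : Finset ι) (w : ι → ℝ)
    (hw : ∀ j ∈ T, 0 < w j) (n : ℕ) (hn : n ≤ T.card)
    (V : List ι) (hVnd : V.Nodup) (hVT : ∀ x ∈ V, x ∈ T) (hVlen : V.length < n)
    (τ : ι) (hτ : τ ∉ T) (hwτ : 0 < w τ) :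
    ∑ t ∈ T \ V.toFinset, (Phat T w n V t - Phat (insert τ T) w n V t)
      = Phat (insert τ T) w n V τ := by
  classical
  set S := T \ V.toFinset with hS
  have hVsub : V.toFinset ⊆ T := fun x hx => hVT x (List.mem_toFinset.mp hx)
  have hVcard : V.toFinset.card = V.length := List.toFinset_card_of_nodup hVnd
  set m := n - V.length - 1 with hm
  have hk : n - V.length = m + 1 := by omega
  have hScard : m + 1 ≤ S.card := by
    rw [hS, Finset.card_sdiff_of_subset hVsub, hVcard]; omega
  have hτS : τ ∉ S := fun h => hτ (Finset.mem_sdiff.mp h).1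
  have hτV : τ ∉ V.toFinset := fun h => hτ (hVsub h)
  have hwS : ∀ j ∈ S, 0 < w j := fun j hj => hw j (Finset.mem_sdiff.mp hj).1
  have ha : 0 < esymm S w (m + 1) := esymm_pos hwS hScard
  have hb : 0 < esymm S w m := esymm_pos hwS (by omega)
  have hS2 : (insert τ T) \ V.toFinset = insert τ S := by
    ext x; simp only [Finset.mem_sdiff, Finset.mem_insert, hS]
    constructor
    · rintro ⟨h1 | h1, h2⟩
      · exact Or.inl h1
      · exact Or.inr ⟨h1, h2⟩
    · rintro (rfl | ⟨h1, h2⟩)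
      · exact ⟨Or.inl rfl, hτV⟩
      · exact ⟨Or.inr h1, h2⟩
  have hS1 : ∀ t ∈ S, T \ insert t V.toFinset = S.erase t := by
    intro t ht
    ext x
    simp only [Finset.mem_sdiff, Finset.mem_insert, Finset.mem_erase, hS]
    tauto
  have hS3 : ∀ t ∈ S, (insert τ T) \ insert t V.toFinset = insert τ (S.erase t) := by
    intro t ht
    have ht' : t ∈ T := (Finset.mem_sdiff.mp ht).1
    have hτt : τ ≠ t := fun h => hτ (h ▸ ht')
    ext x
    simp only [Finset.mem_sdiff, Finset.mem_insert, Finset.mem_erase, hS]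
    constructor
    · rintro ⟨h1 | h1, h2⟩
      · exact Or.inl h1
      · exact Or.inr ⟨fun h => h2 (Or.inl h), h1, fun h => h2 (Or.inr h)⟩
    · rintro (rfl | ⟨h1, h2, h3⟩)
      · exact ⟨Or.inl rfl, fun h => h.elim (fun h => hτt h) (fun h => hτV h)⟩
      · exact ⟨Or.inr h2, fun h => h.elim h1 h3⟩
  have hS4 : (insert τ T) \ insert τ V.toFinset = S := by
    ext x
    simp only [Finset.mem_sdiff, Finset.mem_insert, hS]
    constructor
    · rintro ⟨h1 | h1, h2⟩
      · exact absurd (Or.inl h1) h2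
      · exact ⟨h1, fun h => h2 (Or.inr h)⟩
    · rintro ⟨h1, h2⟩
      exact ⟨Or.inr h1, fun h => h.elim (fun h => hτ (h ▸ h1)) h2⟩
  have hins : esymm (insert τ S) w (m + 1) = esymm S w (m + 1) + w τ * esymm S w m :=
    esymm_insert hτS w m
  have key : ∀ t ∈ S, Phat T w n V t - Phat (insert τ T) w n V t
      = w t * esymm (S.erase t) w m / (((m : ℝ) + 1) * esymm S w (m + 1))
        - w t * esymm (insert τ (S.erase t)) w m
            / (((m : ℝ) + 1) * (esymm S w (m + 1) + w τ * esymm S w m)) := by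
    intro t ht
    simp only [Phat, hk, Nat.add_sub_cancel]
    rw [hS1 t ht, hS3 t ht, hS2, hins, ← hS]
    push_cast
    ring_nf
  rw [Finset.sum_congr rfl key]
  have hRHS : Phat (insert τ T) w n V τ
      = w τ * esymm S w m / (((m : ℝ) + 1) * (esymm S w (m + 1) + w τ * esymm S w m)) := by
    simp only [Phat, hk, Nat.add_sub_cancel]
    rw [hS4, hS2, hins]
    push_cast
    ring_nf
  rw [hRHS, Finset.sum_sub_distrib, ← Finset.sum_div, ← Finset.sum_div,
    sum_deriv, sum_deriv_insert hτS]
  have hm1 : ((m : ℝ) + 1) ≠ 0 := by positivity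
  have hd2 : esymm S w (m + 1) + w τ * esymm S w m ≠ 0 := by positivity
  field_simp
  ring
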